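/- Let r and p be integers with 2 ≤ r ≤ 4 and p ≥ 1, and let q = p. If t ∈ (0,1) is a root of the polynomial P(t) = r(p+q)t³ + (q − p − r(q+2p))t² + (2+r)p·t − p, then t = 1/2. -/
import Mathlib


theorem stmt_6 (r p q : ℕ) (hr : 2 ≤ r) (hr' : r ≤ 4) (hp : 1 ≤ p) (hq : q = p)
    (t : ℝ) (ht : t ∈ Set.Ioo (0 : ℝ) 1)
    (hroot : (r : ℝ) * (p + q) * t ^ 3 + ((q : ℝ) - p - r * (q + 2 * p)) * t ^ 2
        + (2 + r) * p * t - p = 0) :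
    t = 1 / 2 := by
  subst hq
  have hq0 : (0 : ℝ) < q := by exact_mod_cast hp
  have hr2 : (2 : ℝ) ≤ r := by exact_mod_cast hr
  have hr4 : (r : ℝ) ≤ 4 := by exact_mod_cast hr'
  have hfac : (q : ℝ) * ((2 * t - 1) * ((r : ℝ) * t ^ 2 - r * t + 1)) = 0 := by
    linear_combination hroot
  have h0 : (2 * t - 1) * ((r : ℝ) * t ^ 2 - r * t + 1) = 0 :=
    (mul_eq_zero.1 hfac).resolve_left (ne_of_gt hq0)
  rcases mul_eq_zero.1 h0 with h | h
  · linarith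
  · have hsq : (t - 1 / 2) ^ 2 ≤ 0 := by nlinarith
    nlinarith [sq_nonneg (t - 1 / 2)]
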